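/- Let μ > 0, λ ∈ (0,1), and a, a0 ∈ [−1,1] with a0 ≠ 0, (1−λ)a + λa0 < 0, and (1−λ)a − λa0 ≠ 0. Define ρ+ = (1 + √(1 + (μ((1−λ)a + λa0)·b)²))/(−μ((1−λ)a + λa0)) and ρ− = (1 − √(1 + (μ(λa0 − (1−λ)a)·b)²))/(μ(λa0 − (1−λ)a)). Then the values x̃ = −1, r̂1 = −ρ+ρ− − b², ρ = ρ+ + ρ−, and ρ1 = (ρ+ − ρ−)/2 satisfy ρ+ > b > |ρ−|, ρ > 0, ρ1 > 0, |(ρ² + 2r̂1)/(2ρρ1)| < 1, and the Configuration-III equilibrium equations (S1) (1−λ)μa + λμa0·(ρ² + 2r̂1)/(2ρρ1) + (1 − x̃)/ρ = 0, (S2) (1−λ)μa·(ρ² + 2r̂1)/(2ρρ1) + 1/ρ1 + λμa0 = 0, and (S3) μ·(2(1−λ)a/ρ + λa0/ρ1)·r̂1 + 2λμa0·b²/ρ1 = 0. -/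
import Mathlib


set_option maxHeartbeats 1600000 in
/-- Configuration III, x̃ = −1 general circling equilibrium
(Proposition 5.3(d), with the corrected formula for ρ−): with a0 ≠ 0,
(1−λ)a + λa0 < 0 and (1−λ)a − λa0 ≠ 0, the displayed values satisfy
ρ+ > b > |ρ−|, positivity, the strict dot-product constraint, and the
equilibrium equations (S1)–(S3). -/
theorem stmt19 (μ lam a a0 b ρp ρm xt rh1 ρ ρ1 : ℝ)
    (hμ : μ > 0) (hlam1 : 0 < lam) (hlam2 : lam < 1)
    (ha : a ∈ Set.Icc (-1 : ℝ) 1) (ha0 : a0 ∈ Set.Icc (-1 : ℝ) 1)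
    (hb : b > 0)
    (ha0ne : a0 ≠ 0)
    (hcond : (1 - lam) * a + lam * a0 < 0)
    (hne : (1 - lam) * a - lam * a0 ≠ 0)
    (hρp : ρp = (1 + Real.sqrt (1 + (μ * ((1 - lam) * a + lam * a0) * b) ^ 2))
        / (-(μ * ((1 - lam) * a + lam * a0))))
    (hρm : ρm = (1 - Real.sqrt (1 + (μ * (lam * a0 - (1 - lam) * a) * b) ^ 2))
        / (μ * (lam * a0 - (1 - lam) * a)))
    (hxt : xt = -1)
    (hrh1 : rh1 = -(ρp * ρm) - b ^ 2)
    (hρ : ρ = ρp + ρm)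
    (hρ1 : ρ1 = (ρp - ρm) / 2) :
    ρp > b ∧ b > |ρm| ∧ ρ > 0 ∧ ρ1 > 0 ∧
    |(ρ ^ 2 + 2 * rh1) / (2 * ρ * ρ1)| < 1 ∧
    (1 - lam) * μ * a + lam * μ * a0 * ((ρ ^ 2 + 2 * rh1) / (2 * ρ * ρ1))
      + (1 - xt) / ρ = 0 ∧
    (1 - lam) * μ * a * ((ρ ^ 2 + 2 * rh1) / (2 * ρ * ρ1)) + 1 / ρ1
      + lam * μ * a0 = 0 ∧
    μ * (2 * (1 - lam) * a / ρ + lam * a0 / ρ1) * rh1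
      + 2 * lam * μ * a0 * b ^ 2 / ρ1 = 0 := by
  set c : ℝ := μ * ((1 - lam) * a + lam * a0) with hcdef
  set d : ℝ := μ * (lam * a0 - (1 - lam) * a) with hddef
  have hc : c < 0 := mul_neg_of_pos_of_neg hμ hcond
  have hcne : c ≠ 0 := ne_of_lt hc
  have hdne : d ≠ 0 := by
    apply mul_ne_zero (ne_of_gt hμ)
    intro h; apply hne; linarith
  set s1 : ℝ := Real.sqrt (1 + (c * b) ^ 2) with hs1def
  set s2 : ℝ := Real.sqrt (1 + (d * b) ^ 2) with hs2def
  have hs1sq : s1 ^ 2 = 1 + (c * b) ^ 2 := by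
    rw [hs1def, Real.sq_sqrt]; positivity
  have hs2sq : s2 ^ 2 = 1 + (d * b) ^ 2 := by
    rw [hs2def, Real.sq_sqrt]; positivity
  have hcb : (c * b) ^ 2 > 0 := by positivity
  have hdb : (d * b) ^ 2 > 0 := by positivity
  have hs1nn : 0 ≤ s1 := Real.sqrt_nonneg _
  have hs2nn : 0 ≤ s2 := Real.sqrt_nonneg _
  have hs1gt : 1 < s1 := by
    have h : (1:ℝ) ^ 2 < s1 ^ 2 := by rw [one_pow, hs1sq]; linarith
    exact lt_of_pow_lt_pow_left₀ 2 hs1nn h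
  have hs2gt : 1 < s2 := by
    have h : (1:ℝ) ^ 2 < s2 ^ 2 := by rw [one_pow, hs2sq]; linarith
    exact lt_of_pow_lt_pow_left₀ 2 hs2nn h
  have hcρp : -c * ρp = 1 + s1 := by
    rw [hρp]; field_simp
  have hdρm : d * ρm = 1 - s2 := by
    rw [hρm]; field_simp
  clear_value c d s1 s2
  -- quadratic relations
  have hq1 : c * ρp ^ 2 + 2 * ρp - c * b ^ 2 = 0 := by
    have h : c * (c * ρp ^ 2 + 2 * ρp - c * b ^ 2) = 0 := by
      linear_combination (-(c*ρp) + s1 - 1) * hcρp + hs1sq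
    exact (mul_eq_zero.mp h).resolve_left hcne
  have hq2 : d * ρm ^ 2 - 2 * ρm - d * b ^ 2 = 0 := by
    have h : d * (d * ρm ^ 2 - 2 * ρm - d * b ^ 2) = 0 := by
      linear_combination (d*ρm - 1 - s2) * hdρm + hs2sq
    exact (mul_eq_zero.mp h).resolve_left hdne
  have hρppos : 0 < ρp := by
    rw [hρp]
    apply div_pos (by linarith) (by linarith)
  have hρpsq : 0 < ρp ^ 2 - b ^ 2 := by
    have h1 : ρp ^ 2 - b ^ 2 = (-2 * ρp) / c := by
      rw [eq_div_iff hcne]; linear_combination hq1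
    rw [h1]; exact div_pos_of_neg_of_neg (by linarith) hc
  have hρpb : ρp > b := lt_of_pow_lt_pow_left₀ 2 hρppos.le (by linarith)
  have hdρmneg : d * ρm < 0 := by rw [hdρm]; linarith
  have hρmsq : ρm ^ 2 - b ^ 2 < 0 := by
    have h1 : ρm ^ 2 - b ^ 2 = (2 * (d * ρm)) / d ^ 2 := by
      rw [eq_div_iff (pow_ne_zero 2 hdne)]; linear_combination d * hq2
    rw [h1]
    exact div_neg_of_neg_of_pos (by linarith) (by positivity)
  have habsρm : |ρm| < b := by
    refine lt_of_pow_lt_pow_left₀ 2 hb.le ?_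
    rw [sq_abs]; linarith
  have hρm1 : ρm < b := lt_of_abs_lt habsρm
  have hρm2 : -b < ρm := neg_lt_of_abs_lt habsρm
  have hρpos : 0 < ρ := by rw [hρ]; linarith
  have hρ1pos : 0 < ρ1 := by rw [hρ1]; linarith
  have hρne : ρ ≠ 0 := ne_of_gt hρpos
  have hρ1ne : ρ1 ≠ 0 := ne_of_gt hρ1pos
  have hD : 0 < 2 * ρ * ρ1 := by positivity
  have hcd1 : c - d = 2 * (1 - lam) * μ * a := by rw [hcdef, hddef]; ring
  have hcd2 : c + d = 2 * lam * μ * a0 := by rw [hcdef, hddef]; ring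
  have hpm1 : ρp + ρm ≠ 0 := by intro h; apply hρne; rw [hρ, h]
  have hpm2 : ρp - ρm ≠ 0 := by intro h; apply hρ1ne; rw [hρ1, h]; ring
  refine ⟨hρpb, habsρm, hρpos, hρ1pos, ?_, ?_, ?_, ?_⟩
  · rw [abs_div, abs_of_pos hD, div_lt_one hD, abs_lt]
    have e1 : ρ ^ 2 + 2 * rh1 + 2 * ρ * ρ1 = 2 * (ρp ^ 2 - b ^ 2) := by
      rw [hrh1, hρ, hρ1]; ring
    have e2 : 2 * ρ * ρ1 - (ρ ^ 2 + 2 * rh1) = 2 * (b ^ 2 - ρm ^ 2) := by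
      rw [hrh1, hρ, hρ1]; ring
    constructor
    · linarith
    · linarith
  · have hS1 : (1 - lam) * μ * a + lam * μ * a0 * ((ρ ^ 2 + 2 * rh1) / (2 * ρ * ρ1))
        + (1 - xt) / ρ
        = ((c * ρp ^ 2 + 2 * ρp - c * b ^ 2) + (d * ρm ^ 2 - 2 * ρm - d * b ^ 2))
          / (2 * ρ * ρ1) := by
      rw [hxt, hrh1, hρ, hρ1, hcdef, hddef]
      field_simp
      ring
    rw [hS1, hq1, hq2]; norm_num
  · have hS2 : (1 - lam) * μ * a * ((ρ ^ 2 + 2 * rh1) / (2 * ρ * ρ1)) + 1 / ρ1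
        + lam * μ * a0
        = ((c * ρp ^ 2 + 2 * ρp - c * b ^ 2) - (d * ρm ^ 2 - 2 * ρm - d * b ^ 2))
          / (2 * ρ * ρ1) := by
      rw [hrh1, hρ, hρ1, hcdef, hddef]
      field_simp
      ring
    rw [hS2, hq1, hq2]; norm_num
  · have hS3 : μ * (2 * (1 - lam) * a / ρ + lam * a0 / ρ1) * rh1
        + 2 * lam * μ * a0 * b ^ 2 / ρ1
        = (-ρm * (c * ρp ^ 2 + 2 * ρp - c * b ^ 2) - ρp * (d * ρm ^ 2 - 2 * ρm - d * b ^ 2))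
          / (ρ * ρ1) := by
      rw [hrh1, hρ, hρ1, hcdef, hddef]
      field_simp
      ring
    rw [hS3, hq1, hq2]; norm_num
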